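/- Let Σ be a p×p positive definite correlation matrix, let q ≥ 2 be an integer with q ≤ p, let λ ∈ (0,1] be such that every q×q principal submatrix of Σ has smallest eigenvalue at least λ, and let c ∈ (0,1]. Set ε = cλ²/((4+c)q + λcq). If Σ̂ is a real symmetric p×p matrix with ‖Σ̂ − Σ‖_∞ < ε, then for every pair of distinct indices u, v and every subset S of the remaining indices with |S| ≤ q − 2, the principal submatrix Σ̂_{I,I} with I = {u,v} ∪ S is invertible and the partial correlations satisfy |ρ̂_{uv|S} − ρ_{uv|S}| < c/2, where ρ_{uv|S} is computed from Σ and ρ̂_{uv|S} is computed from Σ̂. -/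

import Mathlib

set_option linter.unusedSectionVars false
set_option maxHeartbeats 1000000

open Matrix Finset

/-- Entrywise maximum norm of a square real matrix. -/
noncomputable def supNorm {p : ℕ} (A : Matrix (Fin p) (Fin p) ℝ) : ℝ :=
  ⨆ i, ⨆ j, |A i j|

/-- The principal submatrix `M_{I,I}` of a matrix, indexed by a finite index set `I`. -/
def psub {p : ℕ} (M : Matrix (Fin p) (Fin p) ℝ) (I : Finset (Fin p)) :
    Matrix I I ℝ :=
  M.submatrix (fun i => (i : Fin p)) (fun i => (i : Fin p))

/-- The partial correlation `ρ_{uv|S} = -Ψ⁻¹_{uv} / √(Ψ⁻¹_{uu} Ψ⁻¹_{vv})`, where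
`Ψ = M_{I,I}` is the principal submatrix with `I = {u, v} ∪ S`. -/
noncomputable def pcorr {p : ℕ} (M : Matrix (Fin p) (Fin p) ℝ) (u v : Fin p)
    (S : Finset (Fin p)) : ℝ :=
  let Psiinv := (psub M (insert u (insert v S)))⁻¹
  let ui : ↥(insert u (insert v S)) := ⟨u, Finset.mem_insert_self u _⟩
  let vi : ↥(insert u (insert v S)) :=
    ⟨v, Finset.mem_insert_of_mem (Finset.mem_insert_self v S)⟩
  (-(Psiinv ui vi)) / Real.sqrt (Psiinv ui ui * Psiinv vi vi)

section Helpers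

variable {ι : Type*} [Fintype ι] [DecidableEq ι]


variable {ι : Type*} [Fintype ι] [DecidableEq ι]


lemma rayleigh_lower {A : Matrix ι ι ℝ} (hA : A.IsHermitian) {lam : ℝ}
    (h : ∀ i, lam ≤ hA.eigenvalues i) (x : ι → ℝ) :
    lam * (x ⬝ᵥ x) ≤ x ⬝ᵥ A *ᵥ x := by
  have hU : (hA.eigenvectorUnitary : Matrix ι ι ℝ) * star (hA.eigenvectorUnitary : Matrix ι ι ℝ) = 1 :=
    Matrix.mem_unitaryGroup_iff.mp hA.eigenvectorUnitary.2
  have hpsd : (A - lam • (1 : Matrix ι ι ℝ)).PosSemidef := by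
    have h1 : A - lam • (1 : Matrix ι ι ℝ) =
        (hA.eigenvectorUnitary : Matrix ι ι ℝ) *
          (diagonal (fun i => hA.eigenvalues i - lam)) *
          star (hA.eigenvectorUnitary : Matrix ι ι ℝ) := by
      have h2 := hA.spectral_theorem
      have h3 : lam • (1 : Matrix ι ι ℝ) =
          (hA.eigenvectorUnitary : Matrix ι ι ℝ) * (lam • 1) *
            star (hA.eigenvectorUnitary : Matrix ι ι ℝ) := by
        rw [mul_smul_comm, smul_mul_assoc, mul_one, hU]
      conv_lhs => rw [h2, h3]
      rw [Unitary.conjStarAlgAut_apply]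
      rw [← Matrix.sub_mul, ← Matrix.mul_sub]
      congr 2
      ext i j
      by_cases hij : i = j <;>
        simp [diagonal, hij, Matrix.one_apply, Function.comp]
    rw [h1]
    exact (Matrix.posSemidef_diagonal_iff.mpr (fun i => sub_nonneg.2 (h i))).mul_mul_conjTranspose_same _
  have := hpsd.dotProduct_mulVec_nonneg x
  have hstar : (star x : ι → ℝ) = x := by simp
  rw [hstar, Matrix.sub_mulVec, dotProduct_sub, Matrix.smul_mulVec, Matrix.one_mulVec,
    dotProduct_smul] at this
  have hsmul : lam • (x ⬝ᵥ x) = lam * (x ⬝ᵥ x) := rfl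
  rw [hsmul] at this
  linarith [this]

section Core
variable {lam : ℝ} {Ψ : Matrix ι ι ℝ}

lemma cs_dot (x y : ι → ℝ) : (x ⬝ᵥ y) ^ 2 ≤ (x ⬝ᵥ x) * (y ⬝ᵥ y) := by
  simpa [dotProduct, pow_two] using Finset.sum_mul_sq_le_sq_mul_sq Finset.univ x y

lemma dot_self_nonneg (x : ι → ℝ) : (0:ℝ) ≤ x ⬝ᵥ x :=
  Finset.sum_nonneg fun i _ => mul_self_nonneg _

lemma posDef_of_rayleigh {Ψ : Matrix ι ι ℝ} {lam : ℝ} (hsym : Ψ.IsHermitian) (hlam : 0 < lam)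
    (hray : ∀ x, lam * (x ⬝ᵥ x) ≤ x ⬝ᵥ Ψ *ᵥ x) : Ψ.PosDef := by
  refine Matrix.PosDef.of_dotProduct_mulVec_pos hsym fun x hx => ?_
  have h1 : (0:ℝ) < x ⬝ᵥ x := by
    have hne : x ⬝ᵥ x ≠ 0 := fun h => hx ((dotProduct_self_eq_zero (v := x)).mp h)
    exact lt_of_le_of_ne (dot_self_nonneg x) (Ne.symm hne)
  have := hray x
  have hstar : (star x : ι → ℝ) = x := by simp
  rw [hstar]
  nlinarith

lemma inv_norm_bound (hlam : 0 < lam)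
    (hray : ∀ x, lam * (x ⬝ᵥ x) ≤ x ⬝ᵥ Ψ *ᵥ x) (hunit : IsUnit Ψ) (y : ι → ℝ) :
    lam ^ 2 * ((Ψ⁻¹ *ᵥ y) ⬝ᵥ (Ψ⁻¹ *ᵥ y)) ≤ y ⬝ᵥ y := by
  set x := Ψ⁻¹ *ᵥ y with hxdef
  have hxy : Ψ *ᵥ x = y := by
    rw [hxdef, Matrix.mulVec_mulVec, Matrix.mul_nonsing_inv _ ((Matrix.isUnit_iff_isUnit_det Ψ).mp hunit), Matrix.one_mulVec]
  have h1 : lam * (x ⬝ᵥ x) ≤ x ⬝ᵥ y := by rw [← hxy]; exact hray x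
  have h2 := cs_dot x y
  have h3 := dot_self_nonneg x
  have h4 := dot_self_nonneg y
  rcases eq_or_lt_of_le h3 with h5 | h5
  · nlinarith
  · have h6 : (lam * (x ⬝ᵥ x)) * (lam * (x ⬝ᵥ x)) ≤ (x ⬝ᵥ y) * (x ⬝ᵥ y) :=
      mul_self_le_mul_self (by positivity) h1
    nlinarith

lemma single_dot (j : ι) (x : ι → ℝ) : (Pi.single j 1 : ι → ℝ) ⬝ᵥ x = x j := by
  simp [dotProduct, Pi.single_apply]

lemma mulVec_single' (A : Matrix ι ι ℝ) (j : ι) : A *ᵥ (Pi.single j 1 : ι → ℝ) = fun i => A i j := by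
  ext i; simp [Matrix.mulVec, dotProduct, Pi.single_apply]

lemma inv_entry_bound (hlam : 0 < lam)
    (hray : ∀ x, lam * (x ⬝ᵥ x) ≤ x ⬝ᵥ Ψ *ᵥ x) (hunit : IsUnit Ψ) (i j : ι) :
    |Ψ⁻¹ i j| ≤ 1 / lam := by
  have h1 := inv_norm_bound hlam hray hunit (Pi.single j 1)
  have h2 : (Pi.single j 1 : ι → ℝ) ⬝ᵥ (Pi.single j 1 : ι → ℝ) = 1 := by
    rw [single_dot]; simp
  rw [h2, mulVec_single'] at h1
  have h3 : (Ψ⁻¹ i j) ^ 2 ≤ (fun k => Ψ⁻¹ k j) ⬝ᵥ (fun k => Ψ⁻¹ k j) := by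
    have := Finset.single_le_sum (f := fun k => Ψ⁻¹ k j * Ψ⁻¹ k j)
      (fun k _ => mul_self_nonneg _) (Finset.mem_univ i)
    simpa [dotProduct, pow_two] using this
  have h4 : (Ψ⁻¹ i j) ^ 2 ≤ (1/lam) ^ 2 := by
    rw [div_pow, one_pow]
    rw [le_div_iff₀ (by positivity)]
    nlinarith
  calc |Ψ⁻¹ i j| = Real.sqrt ((Ψ⁻¹ i j) ^ 2) := (Real.sqrt_sq_eq_abs _).symm
    _ ≤ Real.sqrt ((1 / lam) ^ 2) := Real.sqrt_le_sqrt h4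
    _ = 1 / lam := Real.sqrt_sq (by positivity)

lemma sum_abs_le_sqrt (x : ι → ℝ) :
    (∑ i, |x i|) ≤ Real.sqrt ((Fintype.card ι : ℝ) * (x ⬝ᵥ x)) := by
  have key : (∑ i, |x i|) ^ 2 ≤ (Fintype.card ι : ℝ) * (x ⬝ᵥ x) := by
    have := Finset.sum_mul_sq_le_sq_mul_sq Finset.univ (fun i => |x i|) (fun _ => (1:ℝ))
    simp only [mul_one, one_pow, sq_abs] at this
    calc (∑ i, |x i|) ^ 2 ≤ (∑ i, x i ^ 2) * ∑ _i : ι, (1:ℝ) := this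
      _ = (Fintype.card ι : ℝ) * (x ⬝ᵥ x) := by
          simp [dotProduct, pow_two, Finset.sum_const, mul_comm]
  calc (∑ i, |x i|) = Real.sqrt ((∑ i, |x i|) ^ 2) :=
        (Real.sqrt_sq (Finset.sum_nonneg fun i _ => abs_nonneg _)).symm
    _ ≤ Real.sqrt ((Fintype.card ι : ℝ) * (x ⬝ᵥ x)) := Real.sqrt_le_sqrt key

lemma bilin_bound {E : Matrix ι ι ℝ} {ε M : ℝ} (hε : 0 ≤ ε)
    (hM : (Fintype.card ι : ℝ) ≤ M) (hE : ∀ i j, |E i j| ≤ ε) (x y : ι → ℝ) :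
    |x ⬝ᵥ E *ᵥ y| ≤ ε * M * Real.sqrt ((x ⬝ᵥ x) * (y ⬝ᵥ y)) := by
  have hM0 : (0:ℝ) ≤ M := le_trans (Nat.cast_nonneg _) hM
  have expand : x ⬝ᵥ E *ᵥ y = ∑ i, ∑ j, x i * (E i j * y j) := by
    simp [dotProduct, Matrix.mulVec, Finset.mul_sum]
  have step1 : |x ⬝ᵥ E *ᵥ y| ≤ ε * ((∑ i, |x i|) * (∑ j, |y j|)) := by
    rw [expand]
    calc |∑ i, ∑ j, x i * (E i j * y j)| ≤ ∑ i, |∑ j, x i * (E i j * y j)| :=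
          Finset.abs_sum_le_sum_abs _ _
      _ ≤ ∑ i, ∑ j, |x i * (E i j * y j)| :=
          Finset.sum_le_sum fun i _ => Finset.abs_sum_le_sum_abs _ _
      _ ≤ ∑ i, ∑ j, |x i| * ε * |y j| := by
          refine Finset.sum_le_sum fun i _ => Finset.sum_le_sum fun j _ => ?_
          rw [abs_mul, abs_mul]
          have h1 : |E i j| * |y j| ≤ ε * |y j| :=
            mul_le_mul_of_nonneg_right (hE i j) (abs_nonneg _)
          calc |x i| * (|E i j| * |y j|) ≤ |x i| * (ε * |y j|) :=
                mul_le_mul_of_nonneg_left h1 (abs_nonneg _)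
            _ = |x i| * ε * |y j| := by ring
      _ = ε * ((∑ i, |x i|) * (∑ j, |y j|)) := by
          have h1 : ∀ i : ι, ∑ j, |x i| * ε * |y j| = |x i| * ε * ∑ j, |y j| := fun i => by
            rw [← Finset.mul_sum]
          rw [Finset.sum_congr rfl fun i _ => h1 i, ← Finset.sum_mul, ← Finset.sum_mul]
          ring
  have hx := sum_abs_le_sqrt x
  have hy := sum_abs_le_sqrt y
  have hprod : (∑ i, |x i|) * (∑ j, |y j|) ≤ M * Real.sqrt ((x ⬝ᵥ x) * (y ⬝ᵥ y)) := by
    have h1 : (∑ i, |x i|) * (∑ j, |y j|) ≤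
        Real.sqrt ((Fintype.card ι : ℝ) * (x ⬝ᵥ x)) *
          Real.sqrt ((Fintype.card ι : ℝ) * (y ⬝ᵥ y)) :=
      mul_le_mul hx hy (Finset.sum_nonneg fun i _ => abs_nonneg _) (Real.sqrt_nonneg _)
    have h2 : Real.sqrt ((Fintype.card ι : ℝ) * (x ⬝ᵥ x)) *
        Real.sqrt ((Fintype.card ι : ℝ) * (y ⬝ᵥ y)) =
        (Fintype.card ι : ℝ) * Real.sqrt ((x ⬝ᵥ x) * (y ⬝ᵥ y)) := by
      rw [← Real.sqrt_mul (mul_nonneg (Nat.cast_nonneg _) (dot_self_nonneg x))]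
      rw [show (Fintype.card ι : ℝ) * (x ⬝ᵥ x) * ((Fintype.card ι : ℝ) * (y ⬝ᵥ y))
          = (Fintype.card ι : ℝ) ^ 2 * ((x ⬝ᵥ x) * (y ⬝ᵥ y)) by ring]
      rw [Real.sqrt_mul (by positivity), Real.sqrt_sq (by positivity)]
    rw [h2] at h1
    exact le_trans h1 (mul_le_mul_of_nonneg_right hM (Real.sqrt_nonneg _))
  calc |x ⬝ᵥ E *ᵥ y| ≤ ε * ((∑ i, |x i|) * (∑ j, |y j|)) := step1
    _ ≤ ε * (M * Real.sqrt ((x ⬝ᵥ x) * (y ⬝ᵥ y))) := mul_le_mul_of_nonneg_left hprod hε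
    _ = ε * M * Real.sqrt ((x ⬝ᵥ x) * (y ⬝ᵥ y)) := by ring

/-- Main perturbation lemma. -/
lemma inv_perturb {Ψ E : Matrix ι ι ℝ} {lam ε M : ℝ}
    (hΨh : Ψ.IsHermitian) (hEh : E.IsHermitian) (hlam : 0 < lam)
    (hray : ∀ x, lam * (x ⬝ᵥ x) ≤ x ⬝ᵥ Ψ *ᵥ x)
    (hε : 0 ≤ ε) (hM : (Fintype.card ι : ℝ) ≤ M)
    (hE : ∀ i j, |E i j| ≤ ε) (hsmall : ε * M < lam) :
    (Ψ + E).PosDef ∧ ∀ i j,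
      |(Ψ + E)⁻¹ i j - Ψ⁻¹ i j| ≤ ε * M / ((lam - ε * M) * lam) := by
  have hM0 : (0:ℝ) ≤ M := le_trans (Nat.cast_nonneg _) hM
  set lam' := lam - ε * M with hlam'def
  have hlam' : 0 < lam' := by simp [hlam'def]; linarith
  have hray' : ∀ x, lam' * (x ⬝ᵥ x) ≤ x ⬝ᵥ (Ψ + E) *ᵥ x := by
    intro x
    have h1 := bilin_bound hε hM hE x x
    have h2 : Real.sqrt ((x ⬝ᵥ x) * (x ⬝ᵥ x)) = x ⬝ᵥ x :=
      Real.sqrt_mul_self (dot_self_nonneg x)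
    rw [h2] at h1
    have h3 := hray x
    have h4 : x ⬝ᵥ (Ψ + E) *ᵥ x = x ⬝ᵥ Ψ *ᵥ x + x ⬝ᵥ E *ᵥ x := by
      rw [Matrix.add_mulVec, dotProduct_add]
    rw [h4, hlam'def]
    have h5 : -(ε * M * (x ⬝ᵥ x)) ≤ x ⬝ᵥ E *ᵥ x := neg_le_of_abs_le h1
    nlinarith
  have hΨEh : (Ψ + E).IsHermitian := hΨh.add hEh
  have hpd' : (Ψ + E).PosDef := posDef_of_rayleigh hΨEh hlam' hray'
  have hpd : Ψ.PosDef := posDef_of_rayleigh hΨh hlam hray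
  have hunit' : IsUnit (Ψ + E) := hpd'.isUnit
  have hunit : IsUnit Ψ := hpd.isUnit
  refine ⟨hpd', fun i j => ?_⟩
  have hdet' := (Matrix.isUnit_iff_isUnit_det _).mp hunit'
  have hdet := (Matrix.isUnit_iff_isUnit_det _).mp hunit
  -- the key identity
  have hid : (Ψ + E)⁻¹ - Ψ⁻¹ = -((Ψ + E)⁻¹ * E * Ψ⁻¹) := by
    have h1 : (Ψ + E)⁻¹ * (Ψ + E) = 1 := Matrix.nonsing_inv_mul _ hdet'
    have h2 : Ψ * Ψ⁻¹ = 1 := Matrix.mul_nonsing_inv _ hdet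
    calc (Ψ + E)⁻¹ - Ψ⁻¹ = (Ψ + E)⁻¹ * (Ψ * Ψ⁻¹) - ((Ψ + E)⁻¹ * (Ψ + E)) * Ψ⁻¹ := by
          rw [h1, h2, Matrix.mul_one, Matrix.one_mul]
      _ = -((Ψ + E)⁻¹ * E * Ψ⁻¹) := by noncomm_ring
  set x : ι → ℝ := fun k => (Ψ + E)⁻¹ i k with hxdef
  set y : ι → ℝ := fun k => Ψ⁻¹ k j with hydef
  have hentry : ((Ψ + E)⁻¹ * E * Ψ⁻¹) i j = x ⬝ᵥ E *ᵥ y := by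
    rw [Matrix.mul_assoc, Matrix.mul_apply]
    simp only [Matrix.mul_apply, dotProduct, Matrix.mulVec, hxdef, hydef]
  -- bound on x
  have hxvec : x = (Ψ + E)⁻¹ *ᵥ (Pi.single i 1) := by
    rw [mulVec_single']
    funext k
    rw [hxdef]
    exact (congrFun (congrFun hΨEh.inv.eq k) i).symm ▸ rfl
  have hxbound : x ⬝ᵥ x ≤ 1 / lam' ^ 2 := by
    have h1 := inv_norm_bound hlam' hray' hunit' (Pi.single i 1)
    have h2 : (Pi.single i 1 : ι → ℝ) ⬝ᵥ (Pi.single i 1 : ι → ℝ) = 1 := by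
      rw [single_dot]; simp
    rw [h2, ← hxvec] at h1
    rw [le_div_iff₀ (by positivity)]
    nlinarith [h1]
  have hybound : y ⬝ᵥ y ≤ 1 / lam ^ 2 := by
    have h1 := inv_norm_bound hlam hray hunit (Pi.single j 1)
    have h2 : (Pi.single j 1 : ι → ℝ) ⬝ᵥ (Pi.single j 1 : ι → ℝ) = 1 := by
      rw [single_dot]; simp
    rw [h2, mulVec_single'] at h1
    rw [le_div_iff₀ (by positivity)]
    nlinarith [h1]
  have hbb := bilin_bound hε hM hE x y
  have hsq : Real.sqrt ((x ⬝ᵥ x) * (y ⬝ᵥ y)) ≤ 1 / (lam' * lam) := by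
    have h1 : (x ⬝ᵥ x) * (y ⬝ᵥ y) ≤ (1 / lam' ^ 2) * (1 / lam ^ 2) :=
      mul_le_mul hxbound hybound (dot_self_nonneg y) (by positivity)
    calc Real.sqrt ((x ⬝ᵥ x) * (y ⬝ᵥ y)) ≤ Real.sqrt ((1 / lam' ^ 2) * (1 / lam ^ 2)) :=
          Real.sqrt_le_sqrt h1
      _ = 1 / (lam' * lam) := by
          rw [show (1 / lam' ^ 2) * (1 / lam ^ 2) = (1 / (lam' * lam)) ^ 2 by
            field_simp]
          exact Real.sqrt_sq (by positivity)
  have hentry2 : (Ψ + E)⁻¹ i j - Ψ⁻¹ i j = -(x ⬝ᵥ E *ᵥ y) := by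
    have h := congrFun (congrFun hid i) j
    simpa [Matrix.sub_apply, Matrix.neg_apply, hentry] using h
  rw [hentry2, abs_neg]
  calc |x ⬝ᵥ E *ᵥ y| ≤ ε * M * Real.sqrt ((x ⬝ᵥ x) * (y ⬝ᵥ y)) := hbb
    _ ≤ ε * M * (1 / (lam' * lam)) := mul_le_mul_of_nonneg_left hsq (by positivity)
    _ = ε * M / (lam' * lam) := by ring

lemma transpose_eq_of_herm {Ψ : Matrix ι ι ℝ} (hsym : Ψ.IsHermitian) : Ψᵀ = Ψ := by
  ext i j
  simpa using hsym.apply i j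

lemma form_symm {Ψ : Matrix ι ι ℝ} (hsym : Ψ.IsHermitian) (u v : ι → ℝ) :
    u ⬝ᵥ Ψ *ᵥ v = v ⬝ᵥ Ψ *ᵥ u := by
  rw [Matrix.dotProduct_mulVec, ← Matrix.mulVec_transpose, transpose_eq_of_herm hsym,
    dotProduct_comm]

lemma cs_form {Ψ : Matrix ι ι ℝ} (hsym : Ψ.IsHermitian)
    (hpsd : ∀ z : ι → ℝ, 0 ≤ z ⬝ᵥ Ψ *ᵥ z) (x y : ι → ℝ) :
    (x ⬝ᵥ Ψ *ᵥ y) ^ 2 ≤ (x ⬝ᵥ Ψ *ᵥ x) * (y ⬝ᵥ Ψ *ᵥ y) := by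
  set A := y ⬝ᵥ Ψ *ᵥ y with hA
  set B := 2 * (x ⬝ᵥ Ψ *ᵥ y) with hB
  set C := x ⬝ᵥ Ψ *ᵥ x with hC
  have key : ∀ t : ℝ, 0 ≤ A * (t * t) + B * t + C := by
    intro t
    have h := hpsd (x + t • y)
    have hexp : (x + t • y) ⬝ᵥ Ψ *ᵥ (x + t • y) = A * (t * t) + B * t + C := by
      rw [Matrix.mulVec_add, Matrix.mulVec_smul, dotProduct_add, add_dotProduct,
        add_dotProduct, dotProduct_smul, dotProduct_smul, smul_dotProduct, smul_dotProduct]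
      rw [hA, hB, hC]
      rw [form_symm hsym y x]
      simp only [smul_eq_mul]
      ring
    linarith [hexp ▸ h]
  have hd := discrim_le_zero key
  rw [discrim] at hd
  have hd' : (2 * (x ⬝ᵥ Ψ *ᵥ y)) ^ 2 - 4 * A * C ≤ 0 := by rw [← hB]; exact hd
  nlinarith [hd']

lemma psd_form_of_rayleigh {Ψ : Matrix ι ι ℝ} {lam : ℝ} (hlam : 0 < lam)
    (hray : ∀ x, lam * (x ⬝ᵥ x) ≤ x ⬝ᵥ Ψ *ᵥ x) (z : ι → ℝ) : 0 ≤ z ⬝ᵥ Ψ *ᵥ z :=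
  le_trans (mul_nonneg hlam.le (dot_self_nonneg z)) (hray z)

lemma entry_sq_le_diag {Ψ : Matrix ι ι ℝ} (hsym : Ψ.IsHermitian)
    (hpsd : ∀ z : ι → ℝ, 0 ≤ z ⬝ᵥ Ψ *ᵥ z) (u v : ι) :
    (Ψ u v) ^ 2 ≤ Ψ u u * Ψ v v := by
  have h := cs_form hsym hpsd (Pi.single u 1) (Pi.single v 1)
  simpa [mulVec_single', single_dot] using h

lemma inv_diag_ge_one {Ψ : Matrix ι ι ℝ} {lam : ℝ} (hsym : Ψ.IsHermitian) (hlam : 0 < lam)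
    (hray : ∀ x, lam * (x ⬝ᵥ x) ≤ x ⬝ᵥ Ψ *ᵥ x) (hunit : IsUnit Ψ)
    (u : ι) (huu : Ψ u u = 1) : 1 ≤ Ψ⁻¹ u u := by
  have hdet := (Matrix.isUnit_iff_isUnit_det _).mp hunit
  have hpsd := psd_form_of_rayleigh hlam hray
  have h := cs_form hsym hpsd (Pi.single u 1) (Ψ⁻¹ *ᵥ Pi.single u 1)
  have h1 : Ψ *ᵥ (Ψ⁻¹ *ᵥ Pi.single u 1) = Pi.single u 1 := by
    rw [Matrix.mulVec_mulVec, Matrix.mul_nonsing_inv _ hdet, Matrix.one_mulVec]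
  have h2 : (Pi.single u 1 : ι → ℝ) ⬝ᵥ Ψ *ᵥ (Ψ⁻¹ *ᵥ Pi.single u 1) = 1 := by
    rw [h1, single_dot]; simp
  have h3 : (Pi.single u 1 : ι → ℝ) ⬝ᵥ Ψ *ᵥ (Pi.single u 1) = 1 := by
    rw [mulVec_single', single_dot]; exact huu
  have h4 : (Ψ⁻¹ *ᵥ Pi.single u 1) ⬝ᵥ Ψ *ᵥ (Ψ⁻¹ *ᵥ Pi.single u 1) = Ψ⁻¹ u u := by
    rw [h1, dotProduct_comm, single_dot, mulVec_single']
  rw [h2, h3, h4, one_pow, one_mul] at h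
  exact h
set_option maxHeartbeats 1000000 in

lemma ratio_bound {δ a b d a' b' d' : ℝ} (hδ0 : 0 < δ) (hδ1 : δ < 1)
    (hb : 1 ≤ b) (hd : 1 ≤ d) (hb' : 0 < b') (hd' : 0 < d')
    (ha : a ^ 2 ≤ b * d) (ha' : a' ^ 2 ≤ b' * d')
    (h1 : |a' - a| ≤ δ) (h2 : |b' - b| ≤ δ) (h3 : |d' - d| ≤ δ) :
    |(-a') / Real.sqrt (b' * d') - (-a) / Real.sqrt (b * d)| < 2 * δ / (1 - δ) := by
  have hb0 : (0:ℝ) < b := lt_of_lt_of_le one_pos hb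
  have hd0 : (0:ℝ) < d := lt_of_lt_of_le one_pos hd
  set sb := Real.sqrt b with hsb
  set sd := Real.sqrt d with hsd
  set sb' := Real.sqrt b' with hsb'
  set sd' := Real.sqrt d' with hsd'
  set r := Real.sqrt (1 - δ) with hr
  set t := Real.sqrt (1 + δ) with ht
  have hsb1 : 1 ≤ sb := Real.one_le_sqrt.mpr hb
  have hsd1 : 1 ≤ sd := Real.one_le_sqrt.mpr hd
  have hsb'0 : 0 < sb' := Real.sqrt_pos.mpr hb'
  have hsd'0 : 0 < sd' := Real.sqrt_pos.mpr hd'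
  have hsbsq : sb ^ 2 = b := Real.sq_sqrt hb0.le
  have hsdsq : sd ^ 2 = d := Real.sq_sqrt hd0.le
  have hsb'sq : sb' ^ 2 = b' := Real.sq_sqrt hb'.le
  have hsd'sq : sd' ^ 2 = d' := Real.sq_sqrt hd'.le
  have hr0 : 0 < r := Real.sqrt_pos.mpr (by linarith)
  have hrsq : r ^ 2 = 1 - δ := Real.sq_sqrt (by linarith)
  have htsq : t ^ 2 = 1 + δ := Real.sq_sqrt (by linarith)
  have ht0 : 0 ≤ t := Real.sqrt_nonneg _
  have hrt : r < t := Real.sqrt_lt_sqrt (by linarith) (by linarith)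
  have hrsb' : r ≤ sb' := Real.sqrt_le_sqrt (by cases abs_le.mp h2; linarith)
  have hrsd' : r ≤ sd' := Real.sqrt_le_sqrt (by cases abs_le.mp h3; linarith)
  have hsd't : sd' ≤ t * sd := by
    have hdd : d' ≤ (1 + δ) * d := by cases abs_le.mp h3; nlinarith
    calc sd' ≤ Real.sqrt ((1 + δ) * d) := Real.sqrt_le_sqrt hdd
      _ = t * sd := by rw [ht, hsd, Real.sqrt_mul (by linarith)]
  have hs : Real.sqrt (b * d) = sb * sd := by rw [hsb, hsd, Real.sqrt_mul hb0.le]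
  have hs' : Real.sqrt (b' * d') = sb' * sd' := by rw [hsb', hsd', Real.sqrt_mul hb'.le]
  have haa : |a| ≤ sb * sd := by
    rw [← Real.sqrt_sq_eq_abs, ← hs]
    exact Real.sqrt_le_sqrt ha
  have haa' : |a'| ≤ sb' * sd' := by
    rw [← Real.sqrt_sq_eq_abs, ← hs']
    exact Real.sqrt_le_sqrt ha'
  rw [hs, hs']
  clear_value sb sd sb' sd' r t
  clear hs hs' ha ha' hb hd hb' hd' hsb hsd hsb' hsd' hr ht
  -- now purely algebraic
  have ht1 : 1 < t := by nlinarith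
  have hdiffb : |sb' - sb| * (sb' + sb) ≤ δ := by
    have he : (sb' - sb) * (sb' + sb) = b' - b := by linear_combination hsb'sq - hsbsq
    have h4 : |sb' - sb| * (sb' + sb) = |b' - b| := by
      rw [← abs_of_pos (show (0:ℝ) < sb' + sb by linarith), ← abs_mul, he]
    rw [h4]; exact h2
  have hdiffd : |sd' - sd| * (sd' + sd) ≤ δ := by
    have he : (sd' - sd) * (sd' + sd) = d' - d := by linear_combination hsd'sq - hsdsq
    have h4 : |sd' - sd| * (sd' + sd) = |d' - d| := by
      rw [← abs_of_pos (show (0:ℝ) < sd' + sd by linarith), ← abs_mul, he]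
    rw [h4]; exact h3
  have hb1r : |sb' - sb| ≤ δ / (1 + r) := by
    rw [le_div_iff₀ (by linarith)]
    calc |sb' - sb| * (1 + r) ≤ |sb' - sb| * (sb' + sb) :=
          mul_le_mul_of_nonneg_left (by linarith) (abs_nonneg _)
      _ ≤ δ := hdiffb
  have hd1r : |sd' - sd| ≤ δ / (1 + r) := by
    rw [le_div_iff₀ (by linarith)]
    calc |sd' - sd| * (1 + r) ≤ |sd' - sd| * (sd' + sd) :=
          mul_le_mul_of_nonneg_left (by linarith) (abs_nonneg _)
      _ ≤ δ := hdiffd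
  set s := sb * sd with hsdef
  set s' := sb' * sd' with hs'def
  have hs1 : 1 ≤ s := by rw [hsdef]; nlinarith
  have hs'0 : 0 < s' := mul_pos hsb'0 hsd'0
  have hs0 : 0 < s := by linarith
  have hss : |s' - s| ≤ (sd' + sb) * (δ / (1 + r)) := by
    have hid : s' - s = sd' * (sb' - sb) + sb * (sd' - sd) := by rw [hsdef, hs'def]; ring
    calc |s' - s| = |sd' * (sb' - sb) + sb * (sd' - sd)| := by rw [hid]
      _ ≤ |sd' * (sb' - sb)| + |sb * (sd' - sd)| := abs_add_le _ _
      _ = sd' * |sb' - sb| + sb * |sd' - sd| := by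
          rw [abs_mul, abs_mul, abs_of_pos hsd'0, abs_of_pos (by linarith : (0:ℝ) < sb)]
      _ ≤ sd' * (δ / (1 + r)) + sb * (δ / (1 + r)) := by
          have e1 := mul_le_mul_of_nonneg_left hb1r hsd'0.le
          have e2 := mul_le_mul_of_nonneg_left hd1r (by linarith : (0:ℝ) ≤ sb)
          linarith
      _ = (sd' + sb) * (δ / (1 + r)) := by ring
  have hTs : |s' - s| ≤ (t + 1) * (δ / (1 + r)) * s := by
    have hk : (sd' + sb) ≤ (t + 1) * s := by
      have k1 : sd' ≤ t * (sb * sd) := by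
        refine le_trans hsd't ?_
        rw [show t * (sb * sd) = (t * sd) * sb by ring]
        exact le_mul_of_one_le_right (by nlinarith) hsb1
      have k2 : sb ≤ sb * sd := le_mul_of_one_le_right (by linarith) hsd1
      rw [hsdef]; nlinarith
    calc |s' - s| ≤ (sd' + sb) * (δ / (1 + r)) := hss
      _ ≤ ((t + 1) * s) * (δ / (1 + r)) :=
          mul_le_mul_of_nonneg_right hk (by positivity)
      _ = (t + 1) * (δ / (1 + r)) * s := by ring
  have hdec : (-a') / s' - (-a) / s = (a - a') / s + (a' / s') * ((s' - s) / s) := by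
    field_simp
    ring
  rw [hdec]
  have hterm1 : |(a - a') / s| ≤ δ := by
    rw [abs_div, abs_of_pos hs0, div_le_iff₀ hs0]
    have h5 : |a - a'| ≤ δ := by rw [abs_sub_comm]; exact h1
    nlinarith [abs_nonneg (a - a')]
  have hterm2 : |(a' / s') * ((s' - s) / s)| ≤ (t + 1) * (δ / (1 + r)) := by
    rw [abs_mul, abs_div, abs_div, abs_of_pos hs'0, abs_of_pos hs0]
    have e1 : |a'| / s' ≤ 1 := by rw [div_le_one hs'0]; exact haa'
    have e2 : |s' - s| / s ≤ (t + 1) * (δ / (1 + r)) := by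
      rw [div_le_iff₀ hs0]; exact hTs
    calc |a'| / s' * (|s' - s| / s) ≤ 1 * ((t + 1) * (δ / (1 + r))) :=
          mul_le_mul e1 e2 (by positivity) one_pos.le
      _ = (t + 1) * (δ / (1 + r)) := one_mul _
  have htotal : |(a - a') / s + (a' / s') * ((s' - s) / s)| ≤ δ + (t + 1) * (δ / (1 + r)) :=
    le_trans (abs_add_le _ _) (by linarith)
  refine lt_of_le_of_lt htotal ?_
  have p1 : 0 < t * r * (t - r) := mul_pos (mul_pos (by linarith) hr0) (by linarith)
  have p2 : 0 < (t - r) * (t + r) := mul_pos (by linarith) (by linarith)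
  have q : (t + 1) * r ^ 2 < t ^ 2 * (1 + r) := by nlinarith
  have hcross : (t + 1) * δ * (1 - δ) < δ * (1 + δ) * (1 + r) := by
    rw [← hrsq, ← htsq]
    nlinarith [mul_lt_mul_of_pos_left q hδ0]
  have hkey : (t + 1) * (δ / (1 + r)) < δ * (1 + δ) / (1 - δ) := by
    rw [show (t + 1) * (δ / (1 + r)) = (t + 1) * δ / (1 + r) by ring]
    rw [div_lt_div_iff₀ (by linarith) (by linarith)]
    linarith
  have hfin : δ + δ * (1 + δ) / (1 - δ) = 2 * δ / (1 - δ) := by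
    have hne : (1:ℝ) - δ ≠ 0 := by linarith
    rw [eq_div_iff hne]
    field_simp
    ring
  linarith

end Core
end Helpers

section Restriction

variable {p : ℕ}

lemma entry_le_supNorm {p : ℕ} (A : Matrix (Fin p) (Fin p) ℝ) (i j : Fin p) :
    |A i j| ≤ supNorm A := by
  have h1 : |A i j| ≤ ⨆ j', |A i j'| :=
    le_ciSup (f := fun j' => |A i j'|) (Set.Finite.bddAbove (Set.finite_range _)) j
  have h2 : (⨆ j', |A i j'|) ≤ ⨆ i', ⨆ j', |A i' j'| :=
    le_ciSup (f := fun i' => ⨆ j', |A i' j'|) (Set.Finite.bddAbove (Set.finite_range _)) i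
  exact h1.trans h2

/-- zero-extension of a vector on a finset. -/
noncomputable def extv (T : Finset (Fin p)) (y : T → ℝ) : Fin p → ℝ :=
  fun i => if h : i ∈ T then y ⟨i, h⟩ else 0


@[simp] lemma extv_apply (T : Finset (Fin p)) (y : T → ℝ) (i : T) : extv T y ↑i = y i := by
  simp [extv]

lemma extv_dot (T : Finset (Fin p)) (y : T → ℝ) :
    (extv T y) ⬝ᵥ (extv T y) = y ⬝ᵥ y := by
  unfold dotProduct
  calc ∑ i : Fin p, extv T y i * extv T y i
      = ∑ i ∈ T, extv T y i * extv T y i :=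
        (Finset.sum_subset (Finset.subset_univ T) (fun i _ hi => by simp [extv, hi])).symm
    _ = ∑ i : T, extv T y ↑i * extv T y ↑i := (Finset.sum_coe_sort T _).symm
    _ = ∑ i : T, y i * y i := Finset.sum_congr rfl fun i _ => by rw [extv_apply]

lemma extv_form (M : Matrix (Fin p) (Fin p) ℝ) (T : Finset (Fin p)) (y : T → ℝ) :
    (extv T y) ⬝ᵥ M *ᵥ (extv T y) = y ⬝ᵥ (psub M T) *ᵥ y := by
  have hinner : ∀ i : Fin p, (M *ᵥ extv T y) i = ∑ j : T, M i ↑j * y j := by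
    intro i
    unfold Matrix.mulVec dotProduct
    calc ∑ j : Fin p, M i j * extv T y j
        = ∑ j ∈ T, M i j * extv T y j :=
          (Finset.sum_subset (Finset.subset_univ T) (fun j _ hj => by simp [extv, hj])).symm
      _ = ∑ j : T, M i ↑j * extv T y ↑j := (Finset.sum_coe_sort T _).symm
      _ = ∑ j : T, M i ↑j * y j := Finset.sum_congr rfl fun j _ => by rw [extv_apply]
  unfold dotProduct
  calc ∑ i : Fin p, extv T y i * (M *ᵥ extv T y) i
      = ∑ i ∈ T, extv T y i * (M *ᵥ extv T y) i :=
        (Finset.sum_subset (Finset.subset_univ T) (fun i _ hi => by simp [extv, hi])).symm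
    _ = ∑ i : T, extv T y ↑i * (M *ᵥ extv T y) ↑i := (Finset.sum_coe_sort T _).symm
    _ = ∑ i : T, y i * ((psub M T) *ᵥ y) i := by
        refine Finset.sum_congr rfl fun i _ => ?_
        rw [extv_apply, hinner]
        rfl

lemma rayleigh_sub {p : ℕ} (Sig : Matrix (Fin p) (Fin p) ℝ) (hSig : Sig.PosDef)
    {q : ℕ} (hqp : q ≤ p) {lam : ℝ}
    (hlam : ∀ I : Finset (Fin p), I.card = q →
      ∀ (h : (psub Sig I).IsHermitian) (i : I), lam ≤ h.eigenvalues i)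
    (I : Finset (Fin p)) (hIq : I.card ≤ q) :
    ∀ y : I → ℝ, lam * (y ⬝ᵥ y) ≤ y ⬝ᵥ (psub Sig I) *ᵥ y := by
  obtain ⟨J, hIJ, -, hJcard⟩ := Finset.exists_subsuperset_card_eq
    (Finset.subset_univ I) hIq (by simpa using hqp)
  have hermJ : (psub Sig J).IsHermitian := hSig.1.submatrix _
  have hRJ := fun z => rayleigh_lower hermJ (hlam J hJcard hermJ) z
  intro y
  set x := extv I y with hx
  set z : {x_1 // x_1 ∈ J} → ℝ := fun j => x ↑j with hz
  have hxz : extv J z = x := by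
    funext i
    by_cases hiJ : i ∈ J
    · simp [extv, hiJ, hz]
    · have hiI : i ∉ I := fun h => hiJ (hIJ h)
      simp [extv, hiJ, hiI, hz, hx]
  have e1 : y ⬝ᵥ y = z ⬝ᵥ z := by rw [← extv_dot I y, ← hx, ← hxz, extv_dot J z]
  have e2 : y ⬝ᵥ (psub Sig I) *ᵥ y = z ⬝ᵥ (psub Sig J) *ᵥ z := by
    rw [← extv_form Sig I y, ← hx, ← hxz, extv_form Sig J z]
  rw [e1, e2]; exact hRJ z

end Restriction

/-- Deterministic error propagation to partial correlations: if `Σ` is a `p × p`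
positive definite correlation matrix, `2 ≤ q ≤ p`, every `q × q` principal
submatrix of `Σ` has smallest eigenvalue at least `λ ∈ (0,1]`, `c ∈ (0,1]`, and
`Σ̂` is symmetric with `‖Σ̂ - Σ‖_∞ < ε = cλ²/((4+c)q + λcq)`, then for all distinct
`u, v` and all `S ⊆ V \ {u,v}` with `|S| ≤ q - 2`, the principal submatrix
`Σ̂_{I,I}` with `I = {u,v} ∪ S` is invertible and `|ρ̂_{uv|S} - ρ_{uv|S}| < c/2`. -/
theorem stmt4 {p : ℕ} (Sig : Matrix (Fin p) (Fin p) ℝ) (hSig : Sig.PosDef)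
    (hdiag : ∀ i, Sig i i = 1)
    (q : ℕ) (hq2 : 2 ≤ q) (hqp : q ≤ p)
    (lam : ℝ) (hlam0 : 0 < lam) (hlam1 : lam ≤ 1)
    (hlam : ∀ I : Finset (Fin p), I.card = q →
      ∀ (h : (psub Sig I).IsHermitian) (i : I), lam ≤ h.eigenvalues i)
    (c : ℝ) (hc0 : 0 < c) (hc1 : c ≤ 1)
    (Shat : Matrix (Fin p) (Fin p) ℝ) (hShat : Shat.IsSymm)
    (hE : supNorm (Shat - Sig) < c * lam ^ 2 / ((4 + c) * q + lam * c * q)) :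
    ∀ u v : Fin p, u ≠ v → ∀ S : Finset (Fin p), u ∉ S → v ∉ S → S.card ≤ q - 2 →
      IsUnit (psub Shat (insert u (insert v S))) ∧
        |pcorr Shat u v S - pcorr Sig u v S| < c / 2 := by
  intro u v huv S huS hvS hScard
  simp only [pcorr]
  set I : Finset (Fin p) := insert u (insert v S) with hI
  set ui : ↥I := ⟨u, Finset.mem_insert_self u _⟩ with hui
  set vi : ↥I := ⟨v, Finset.mem_insert_of_mem (Finset.mem_insert_self v S)⟩ with hvi
  have huivi : ui ≠ vi := fun h => huv (congrArg Subtype.val h)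
  have hermSig : Sig.IsHermitian := hSig.1
  have hermShat : Shat.IsHermitian := by
    rw [Matrix.IsHermitian, conjTranspose_eq_transpose_of_trivial]
    exact hShat
  have hIq : I.card ≤ q := by
    have h0 : I.card = (insert u (insert v S)).card := by rw [hI]
    have h1 := Finset.card_insert_le u (insert v S)
    have h2 := Finset.card_insert_le v S
    omega
  set ε := c * lam ^ 2 / ((4 + c) * q + lam * c * q) with hεdef
  have hq0 : (0:ℝ) < q := by
    have : (0:ℕ) < q := by omega
    exact_mod_cast this
  have hden : (0:ℝ) < (4 + c) * q + lam * c * q := by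
    have h1 : (0:ℝ) < (4 + c) * q := mul_pos (by linarith) hq0
    have h2 : (0:ℝ) < lam * c * q := mul_pos (mul_pos hlam0 hc0) hq0
    linarith
  have hε0 : 0 < ε := div_pos (by positivity) hden
  have hD : (0:ℝ) < 4 + c + lam * c := by
    have := mul_pos hlam0 hc0; linarith
  have hqe : ε * (q:ℝ) = c * lam ^ 2 / (4 + c + lam * c) := by
    rw [hεdef]
    rw [div_mul_eq_mul_div, div_eq_div_iff (ne_of_gt hden) (show (4:ℝ) + c + lam * c ≠ 0 by linarith [mul_pos hlam0 hc0])]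
    ring
  have hsmall : ε * (q:ℝ) < lam := by
    rw [hqe, div_lt_iff₀ hD]
    nlinarith [mul_pos hlam0 (show (0:ℝ) < 4 + c by linarith)]
  -- entrywise error bound
  have hEbnd : ∀ i j : ↥I, |psub (Shat - Sig) I i j| ≤ ε := by
    intro i j
    exact le_of_lt (lt_of_le_of_lt (entry_le_supNorm (Shat - Sig) ↑i ↑j) hE)
  have hM : (Fintype.card ↥I : ℝ) ≤ (q:ℝ) := by
    rw [Fintype.card_coe]
    exact_mod_cast hIq
  have hray := rayleigh_sub Sig hSig hqp hlam I hIq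
  have hermΨ : (psub Sig I).IsHermitian := hermSig.submatrix _
  have hermEm : (psub (Shat - Sig) I).IsHermitian := (hermShat.sub hermSig).submatrix _
  have hsplit : psub Shat I = psub Sig I + psub (Shat - Sig) I := by
    ext i j
    simp [psub]
  obtain ⟨hpdhat, hbound⟩ := inv_perturb hermΨ hermEm hlam0 hray hε0.le hM hEbnd hsmall
  rw [← hsplit] at hpdhat hbound
  have hpd : (psub Sig I).PosDef := posDef_of_rayleigh hermΨ hlam0 hray
  have hunit : IsUnit (psub Sig I) := hpd.isUnit
  have hunithat : IsUnit (psub Shat I) := hpdhat.isUnit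
  refine ⟨hunithat, ?_⟩
  -- entries
  set A := (psub Sig I)⁻¹ with hA
  set A' := (psub Shat I)⁻¹ with hA'
  set δ := c / (4 + c) with hδdef
  have hδ0 : 0 < δ := div_pos hc0 (by linarith)
  have hδ1 : δ < 1 := by
    rw [hδdef, div_lt_one (by linarith)]; linarith
  have hlamne : lam ≠ 0 := ne_of_gt hlam0
  have h4c : (4:ℝ) + c ≠ 0 := by linarith
  have hDne : (4:ℝ) + c + lam * c ≠ 0 := ne_of_gt hD
  have hδeq : ε * (q:ℝ) / ((lam - ε * (q:ℝ)) * lam) = δ := by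
    have h2 : lam - ε * (q:ℝ) = lam * (4 + c) / (4 + c + lam * c) := by
      rw [hqe]
      field_simp
      ring
    rw [h2, hqe, hδdef]
    field_simp
  -- matrix entry facts
  have hΨuu : (psub Sig I) ui ui = 1 := by simp [psub, hdiag]
  have hΨvv : (psub Sig I) vi vi = 1 := by simp [psub, hdiag]
  have hb : 1 ≤ A ui ui := inv_diag_ge_one hermΨ hlam0 hray hunit ui hΨuu
  have hd : 1 ≤ A vi vi := inv_diag_ge_one hermΨ hlam0 hray hunit vi hΨvv
  have hpdinv : (psub Sig I)⁻¹.PosDef := hpd.inv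
  have hpdhatinv : (psub Shat I)⁻¹.PosDef := hpdhat.inv
  have hsingle : ∀ w : ↥I, (Pi.single w (1:ℝ) : ↥I → ℝ) ≠ 0 := by
    intro w h
    have := congrFun h w
    simp at this
  have hdiagpos : ∀ (B : Matrix ↥I ↥I ℝ), B.PosDef → ∀ w, 0 < B w w := by
    intro B hB w
    have h := hB.dotProduct_mulVec_pos (x := Pi.single w 1) (hsingle w)
    simpa [single_dot, mulVec_single'] using h
  have hb' : 0 < A' ui ui := hdiagpos _ hpdhatinv ui
  have hd' : 0 < A' vi vi := hdiagpos _ hpdhatinv vi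
  have hermAinv : (psub Sig I)⁻¹.IsHermitian := hermΨ.inv
  have hermA'inv : (psub Shat I)⁻¹.IsHermitian := (hermShat.submatrix _).inv
  have ha : (A ui vi) ^ 2 ≤ A ui ui * A vi vi :=
    entry_sq_le_diag hermAinv (fun z => by simpa using hpdinv.posSemidef.dotProduct_mulVec_nonneg z) ui vi
  have ha' : (A' ui vi) ^ 2 ≤ A' ui ui * A' vi vi :=
    entry_sq_le_diag hermA'inv (fun z => by simpa using hpdhatinv.posSemidef.dotProduct_mulVec_nonneg z) ui vi
  have h1 : |A' ui vi - A ui vi| ≤ δ := by rw [← hδeq]; exact hbound ui vi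
  have h2 : |A' ui ui - A ui ui| ≤ δ := by rw [← hδeq]; exact hbound ui ui
  have h3 : |A' vi vi - A vi vi| ≤ δ := by rw [← hδeq]; exact hbound vi vi
  have key := ratio_bound hδ0 hδ1 hb hd hb' hd' ha ha' h1 h2 h3
  have hhalf : 2 * δ / (1 - δ) = c / 2 := by
    rw [hδdef]
    have hne : (1:ℝ) - c / (4 + c) = 4 / (4 + c) := by field_simp; ring
    rw [hne]
    field_simp
    ring
  rw [hhalf] at key
  exact key
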